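/- Let m_1, ..., m_k be positive real numbers and let m and r be positive integers. Then there exists a positive constant h such that if a = \sum_{i=1}^k a_i m_i / r for some integers a_1, ..., a_k with each a_i \geq -m, and a > 0, then a \geq h. -/
import Mathlib


/-- positive values of `∑ aᵢ mᵢ / r` with integer coefficients bounded
below by `-m` are bounded away from zero. -/
theorem positive_values_bounded_below (k : ℕ) (m : Fin k → ℝ) (hm : ∀ i, 0 < m i)
    (M r : ℕ) (hM : 0 < M) (hr : 0 < r) :
    ∃ h : ℝ, 0 < h ∧ ∀ a : ℝ,
      (∃ c : Fin k → ℤ, (∀ i, -(M : ℤ) ≤ c i) ∧ a = ∑ i, (c i : ℝ) * m i / r) →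
      0 < a → h ≤ a := by
  classical
  rcases Nat.eq_zero_or_pos k with hk | hk
  · subst hk
    refine ⟨1, one_pos, ?_⟩
    rintro a ⟨c, -, rfl⟩ ha
    simp at ha
  have hne : Nonempty (Fin k) := ⟨⟨0, hk⟩⟩
  have hune : (Finset.univ : Finset (Fin k)).Nonempty := Finset.univ_nonempty
  set ε := Finset.univ.inf' hune m with hεdef
  have hε0 : 0 < ε := (Finset.lt_inf'_iff _).2 fun i _ => hm i
  set S := ∑ i, m i with hSdef
  have hS0 : 0 ≤ S := Finset.sum_nonneg fun i _ => (hm i).le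
  have hrMS : (0:ℝ) ≤ (r:ℝ) + M * S := by positivity
  set N : ℤ := ⌈((r:ℝ) + M * S) / ε⌉ with hNdef
  set s : Finset (Fin k → ℤ) := Finset.Icc (fun _ => -(M:ℤ)) (fun _ => N) with hsdef
  set f : (Fin k → ℤ) → ℝ := fun c => ∑ i, (c i : ℝ) * m i / r with hfdef
  set P : Finset ℝ := (s.image f).filter (fun x => 0 < x) with hPdef
  have hPpos : ∀ x ∈ P, 0 < x := fun x hx => (Finset.mem_filter.1 hx).2
  refine ⟨if hP : P.Nonempty then min 1 (P.min' hP) else 1, ?_, ?_⟩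
  · split_ifs with hP
    · exact lt_min one_pos (hPpos _ (P.min'_mem hP))
    · exact one_pos
  · rintro a ⟨c, hc, rfl⟩ ha
    set a := ∑ i, (c i : ℝ) * m i / r with hadef
    by_cases h1 : 1 < a
    · have : (if hP : P.Nonempty then min 1 (P.min' hP) else 1) ≤ 1 := by
        split_ifs with hP
        · exact min_le_left _ _
        · exact le_refl 1
      linarith
    push_neg at h1
    have hsum : ∑ j, (c j : ℝ) * m j ≤ r := by
      have : a = (∑ j, (c j : ℝ) * m j) / r := by
        rw [hadef, Finset.sum_div]
      rw [this] at h1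
      have hr' : (0:ℝ) < r := by exact_mod_cast hr
      calc ∑ j, (c j : ℝ) * m j ≤ 1 * r := by
            rw [div_le_one hr'] at h1; linarith
        _ = r := one_mul _
    have hcN : ∀ i, c i ≤ N := by
      intro i
      have herase : ∑ j ∈ Finset.univ.erase i, -(M:ℝ) * m j ≤
          ∑ j ∈ Finset.univ.erase i, (c j : ℝ) * m j := by
        refine Finset.sum_le_sum fun j _ => ?_
        have : -(M:ℝ) ≤ (c j : ℝ) := by exact_mod_cast hc j
        exact mul_le_mul_of_nonneg_right this (hm j).le
      have herase2 : -((M:ℝ) * S) ≤ ∑ j ∈ Finset.univ.erase i, -(M:ℝ) * m j := by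
        have h2 : ∑ j ∈ Finset.univ.erase i, (M:ℝ) * m j ≤ ∑ j, (M:ℝ) * m j := by
          refine Finset.sum_le_sum_of_subset_of_nonneg (Finset.erase_subset _ _) ?_
          intro j _ _
          exact mul_nonneg (Nat.cast_nonneg M) (hm j).le
        have h3 : ∑ j, (M:ℝ) * m j = (M:ℝ) * S := by
          rw [hSdef, Finset.mul_sum]
        have h4 : ∑ j ∈ Finset.univ.erase i, -(M:ℝ) * m j
            = -∑ j ∈ Finset.univ.erase i, (M:ℝ) * m j := by
          rw [← Finset.sum_neg_distrib]
          exact Finset.sum_congr rfl fun j _ => by ring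
        rw [h4]
        linarith
      have hsplit : (c i : ℝ) * m i
          = ∑ j, (c j : ℝ) * m j - ∑ j ∈ Finset.univ.erase i, (c j : ℝ) * m j := by
        rw [Finset.sum_erase_eq_sub (Finset.mem_univ i)]
        ring
      have hbound : (c i : ℝ) * m i ≤ (r:ℝ) + M * S := by
        rw [hsplit]; linarith
      have hci : (c i : ℝ) ≤ ((r:ℝ) + M * S) / ε := by
        have h5 : (c i : ℝ) ≤ ((r:ℝ) + M * S) / m i :=
          (le_div_iff₀ (hm i)).2 hbound
        have h6 : ((r:ℝ) + M * S) / m i ≤ ((r:ℝ) + M * S) / ε :=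
          div_le_div_of_nonneg_left hrMS hε0 (Finset.inf'_le _ (Finset.mem_univ i))
        linarith
      have : (c i : ℝ) ≤ (N : ℝ) := le_trans hci (Int.le_ceil _)
      exact_mod_cast this
    have hmem : a ∈ P := by
      refine Finset.mem_filter.2 ⟨Finset.mem_image.2 ⟨c, ?_, rfl⟩, ha⟩
      exact Finset.mem_Icc.2 ⟨fun i => hc i, fun i => hcN i⟩
    have hPne : P.Nonempty := ⟨a, hmem⟩
    rw [dif_pos hPne]
    exact le_trans (min_le_right _ _) (P.min'_le _ hmem)
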